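/- Let λ > 0, M > 0 and m > 0 be real numbers, and suppose the control estimate ‖u‖ ≤ (M/λ)·‖Pu − λ²u‖ + m·‖Qu‖ holds for every u ∈ H. Then for every u ∈ H one has ‖u‖ ≤ ((2M + (M·‖Q‖ + m)²)/λ)·‖Pu − iλ·Q*(Qu) − λ²u‖, where ‖Q‖ is the operator norm of Q. -/

import Mathlib

open ContinuousLinearMap Complex


/-- Bounded-operator core of Theorem 1.2(1)/Proposition 3.17 (case γ = μ = 0, explicit
constant): a control estimate `‖u‖ ≤ (M/λ)‖Pu − λ²u‖ + m‖Qu‖` yields the resolvent bound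
`‖u‖ ≤ ((2M + (M‖Q‖ + m)²)/λ)‖Pu − iλQ*(Qu) − λ²u‖`. -/
theorem control_to_resolvent
    {H Y : Type*} [NormedAddCommGroup H] [InnerProductSpace ℂ H] [CompleteSpace H]
    [NormedAddCommGroup Y] [InnerProductSpace ℂ Y] [CompleteSpace Y]
    (P : H →L[ℂ] H) (hP : IsSelfAdjoint P)
    (hPnn : ∀ u : H, 0 ≤ (inner ℂ (P u) u : ℂ).re)
    (Q : H →L[ℂ] Y)
    (lam M m : ℝ) (hlam : 0 < lam) (hM : 0 < M) (hm : 0 < m)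
    (hctrl : ∀ u : H, ‖u‖ ≤ (M / lam) * ‖P u - ((lam : ℂ) ^ 2) • u‖ + m * ‖Q u‖) :
    ∀ u : H, ‖u‖ ≤ ((2 * M + (M * ‖Q‖ + m) ^ 2) / lam) *
      ‖P u - (Complex.I * (lam : ℂ)) • (ContinuousLinearMap.adjoint Q) (Q u)
        - ((lam : ℂ) ^ 2) • u‖ := by
  intro u
  set v := P u - (Complex.I * (lam : ℂ)) • (ContinuousLinearMap.adjoint Q) (Q u)
      - ((lam : ℂ) ^ 2) • u with hv
  have hPreal : (inner ℂ (P u) u : ℂ).im = 0 := by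
    have h1 : (starRingEnd ℂ) (inner ℂ (P u) u : ℂ) = inner ℂ (P u) u := by
      rw [inner_conj_symm]
      exact (hP.isSymmetric u u).symm
    exact Complex.conj_eq_iff_im.mp h1
  have him : (inner ℂ v u : ℂ).im = lam * ‖Q u‖ ^ 2 := by
    have hiv : (inner ℂ v u : ℂ) = inner ℂ (P u) u
        - (starRingEnd ℂ) (Complex.I * (lam : ℂ)) * ((‖Q u‖ : ℂ)) ^ 2
        - (starRingEnd ℂ) ((lam : ℂ) ^ 2) * ((‖u‖ : ℂ)) ^ 2 := by
      simp only [hv, inner_sub_left, inner_smul_left, adjoint_inner_left,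
        inner_self_eq_norm_sq_to_K]
      norm_cast
    rw [hiv]
    simp [Complex.sub_im, Complex.mul_im, Complex.conj_im, Complex.conj_re, hPreal,
      ← Complex.ofReal_pow]
    try ring
  have hB : lam * ‖Q u‖ ^ 2 ≤ ‖v‖ * ‖u‖ := by
    calc lam * ‖Q u‖ ^ 2 = (inner ℂ v u : ℂ).im := him.symm
    _ ≤ ‖(inner ℂ v u : ℂ)‖ := Complex.im_le_norm _
    _ ≤ ‖v‖ * ‖u‖ := by exact norm_inner_le_norm v u
  have hC : ‖P u - ((lam : ℂ) ^ 2) • u‖ ≤ ‖v‖ + lam * (‖Q‖ * ‖Q u‖) := by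
    have heq : P u - ((lam : ℂ) ^ 2) • u
        = v + (Complex.I * (lam : ℂ)) • (ContinuousLinearMap.adjoint Q) (Q u) := by
      rw [hv]; abel
    have hn : ‖(Complex.I * (lam : ℂ)) • (ContinuousLinearMap.adjoint Q) (Q u)‖
        ≤ lam * (‖Q‖ * ‖Q u‖) := by
      rw [norm_smul]
      have h1 : ‖Complex.I * (lam : ℂ)‖ = lam := by simp [abs_of_pos hlam]
      rw [h1]
      have h2 : ‖(ContinuousLinearMap.adjoint Q) (Q u)‖ ≤ ‖Q‖ * ‖Q u‖ := by
        calc ‖(ContinuousLinearMap.adjoint Q) (Q u)‖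
            ≤ ‖ContinuousLinearMap.adjoint Q‖ * ‖Q u‖ := le_opNorm _ _
        _ = ‖Q‖ * ‖Q u‖ := by rw [LinearIsometryEquiv.norm_map]
      exact mul_le_mul_of_nonneg_left h2 hlam.le
    calc ‖P u - ((lam : ℂ) ^ 2) • u‖
        ≤ ‖v‖ + ‖(Complex.I * (lam : ℂ)) • (ContinuousLinearMap.adjoint Q) (Q u)‖ := by
          rw [heq]; exact norm_add_le _ _
    _ ≤ ‖v‖ + lam * (‖Q‖ * ‖Q u‖) := by linarith
  have h1 : ‖u‖ ≤ (M / lam) * ‖v‖ + (M * ‖Q‖ + m) * ‖Q u‖ := by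
    calc ‖u‖ ≤ (M / lam) * ‖P u - ((lam : ℂ) ^ 2) • u‖ + m * ‖Q u‖ := hctrl u
    _ ≤ (M / lam) * (‖v‖ + lam * (‖Q‖ * ‖Q u‖)) + m * ‖Q u‖ := by
        gcongr
        all_goals positivity
    _ = (M / lam) * ‖v‖ + (M * ‖Q‖ + m) * ‖Q u‖ := by
        field_simp; ring
  set a := ‖u‖; set b := ‖Q u‖; set c := ‖v‖; set q := ‖Q‖
  have ha : 0 ≤ a := norm_nonneg _
  have hb : 0 ≤ b := norm_nonneg _
  have hc : 0 ≤ c := norm_nonneg _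
  have hq : 0 ≤ q := norm_nonneg _
  have hK : 0 < M * q + m := by positivity
  rcases hc.eq_or_lt with hc0 | hc0
  · have hb2 : lam * b ^ 2 ≤ 0 := by rw [← hc0] at hB; simpa using hB
    have hb0 : b = 0 := by
      have h2 : b ^ 2 = 0 := le_antisymm (by nlinarith [sq_nonneg b]) (sq_nonneg b)
      exact pow_eq_zero_iff two_ne_zero |>.mp h2
    have ha0 : a ≤ 0 := by
      have := h1; rw [hb0, ← hc0] at this; simpa using this
    rw [← hc0]
    simpa using le_antisymm ha0 ha |>.le
  · rw [div_mul_eq_mul_div, le_div_iff₀ hlam]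
    have h1' : lam * a ≤ M * c + (M * q + m) * (lam * b) := by
      have h2 := mul_le_mul_of_nonneg_left h1 hlam.le
      calc lam * a ≤ lam * ((M / lam) * c + (M * q + m) * b) := h2
      _ = M * c + (M * q + m) * (lam * b) := by field_simp
    nlinarith [sq_nonneg ((M * q + m) * c - lam * b), mul_pos hc0 hc0,
      mul_le_mul_of_nonneg_left hB hc, mul_le_mul_of_nonneg_left h1' hc0.le]
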